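/- Let H be a strategic game and assume property D(ω) holds, where ω is the first infinite ordinal. Then every ω-outcome of every relaxation of LS̄ equals GS̄^ω: if R is a relaxation of LS̄ with R^{ω+1} = R^ω, then R^ω = GS̄^ω. In particular any two ω-outcomes of relaxations of LS̄ coincide, i.e., LS̄ is DS-order independent. -/

import Mathlib

universe u

/-- Transfinite iterations of an operator on a complete lattice:
`F^0 = ⊤`, `F^(α+1) = F (F^α)`, and `F^β = ⨅_{α<β} F^α` for limit `β`. -/
noncomputable def iterate {D : Type u} [CompleteLattice D] (F : D → D) (α : Ordinal.{0}) : D :=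
  Ordinal.limitRecOn α ⊤ (fun _ ih => F ih) (fun β _ ih => ⨅ (γ : Ordinal) (h : γ < β), ih γ h)

/-- `R` is a relaxation of `F`. -/
def Relaxation {D : Type u} [CompleteLattice D] (F R : D → D) : Prop :=
  ∀ α : Ordinal.{0},
    F (iterate R α) ≤ R (iterate R α) ∧
    (F (iterate R α) ≤ iterate R α → R (iterate R α) ≤ iterate R α) ∧
    (R (iterate R α) = iterate R α → F (iterate R α) = iterate R α)

section Games

variable {n : ℕ} {T : Fin n → Type u}

/-- `GR` operator: strategies that are a best response *in the initial game* to
some opponent belief held in `G`. -/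
def GR (p : ∀ i : Fin n, (∀ j, T j) → ℝ) (G : ∀ i, Set (T i)) : ∀ i, Set (T i) :=
  fun i => {s : T i | ∃ μ : ∀ j, T j, (∀ j, j ≠ i → μ j ∈ G j) ∧
    ∀ s' : T i, p i (Function.update μ i s') ≤ p i (Function.update μ i s)}

/-- `LR` operator: strategies that are a best response *in `G`* to
some opponent belief held in `G`. -/
def LR (p : ∀ i : Fin n, (∀ j, T j) → ℝ) (G : ∀ i, Set (T i)) : ∀ i, Set (T i) :=
  fun i => {s : T i | ∃ μ : ∀ j, T j, (∀ j, j ≠ i → μ j ∈ G j) ∧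
    ∀ s' ∈ G i, p i (Function.update μ i s') ≤ p i (Function.update μ i s)}

/-- `s'` strictly dominates `s` on the restriction `G`. -/
def Dom (p : ∀ i : Fin n, (∀ j, T j) → ℝ) (G : ∀ i, Set (T i)) (i : Fin n)
    (s' s : T i) : Prop :=
  ∀ μ : ∀ j, T j, (∀ j, j ≠ i → μ j ∈ G j) →
    p i (Function.update μ i s) < p i (Function.update μ i s')

/-- `GS` operator: strategies not strictly dominated on `G` by any strategy of the initial game. -/
def GS (p : ∀ i : Fin n, (∀ j, T j) → ℝ) (G : ∀ i, Set (T i)) : ∀ i, Set (T i) :=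
  fun i => {s : T i | ¬ ∃ s' : T i, Dom p G i s' s}

/-- `LS` operator: strategies not strictly dominated on `G` by any strategy in `G`. -/
def LS (p : ∀ i : Fin n, (∀ j, T j) → ℝ) (G : ∀ i, Set (T i)) : ∀ i, Set (T i) :=
  fun i => {s : T i | ¬ ∃ s' ∈ G i, Dom p G i s' s}

/-- Property B: to each belief in the initial game a best response (in the initial game) exists. -/
def PropB (p : ∀ i : Fin n, (∀ j, T j) → ℝ) : Prop :=
  ∀ (i : Fin n) (μ : ∀ j, T j), ∃ s : T i, ∀ s' : T i,
    p i (Function.update μ i s') ≤ p i (Function.update μ i s)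

/-- Property D(α). -/
def PropD (p : ∀ i : Fin n, (∀ j, T j) → ℝ) (α : Ordinal.{0}) : Prop :=
  ∀ R : (∀ i, Set (T i)) → (∀ i, Set (T i)), Relaxation (fun G => LS p G ⊓ G) R →
    ∀ (i : Fin n) (s : T i), (∃ s' : T i, Dom p (iterate R α) i s' s) →
      ∃ s' ∈ iterate R α i, Dom p (iterate R α) i s' s

/-- Property C(α). -/
def PropC (p : ∀ i : Fin n, (∀ j, T j) → ℝ) (α : Ordinal.{0}) : Prop :=
  ∀ R : (∀ i, Set (T i)) → (∀ i, Set (T i)), Relaxation (fun G => LS p G ⊓ G) R →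
    ∀ (i : Fin n) (s : T i), (∃ s' : T i, Dom p (iterate R α) i s' s) →
      ∃ s'' : T i, Dom p (iterate R α) i s'' s ∧ ¬ ∃ s' : T i, Dom p (iterate R α) i s' s''

end Games

set_option linter.unusedVariables false


section Aux

lemma iterate_zero' {D : Type u} [CompleteLattice D] (F : D → D) :
    iterate F 0 = ⊤ := Ordinal.limitRecOn_zero _ _ _

lemma iterate_succ' {D : Type u} [CompleteLattice D] (F : D → D) (α : Ordinal.{0}) :
    iterate F (α + 1) = F (iterate F α) := by
  rw [iterate, Ordinal.add_one_eq_succ, Ordinal.limitRecOn_succ]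
  rfl

lemma iterate_limit' {D : Type u} [CompleteLattice D] (F : D → D) {β : Ordinal.{0}}
    (hβ : Order.IsSuccLimit β) :
    iterate F β = ⨅ (γ : Ordinal) (_ : γ < β), iterate F γ := by
  rw [iterate, Ordinal.limitRecOn_limit _ _ _ _ hβ]
  rfl

end Aux

theorem stmt_19 {n : ℕ} (hn : 2 ≤ n) {T : Fin n → Type u} [∀ i, Nonempty (T i)]
    (p : ∀ i : Fin n, (∀ j, T j) → ℝ) (hD : PropD p Ordinal.omega0) :
    ∀ R, Relaxation (fun G => LS p G ⊓ G) R →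
      iterate R (Ordinal.omega0 + 1) = iterate R Ordinal.omega0 →
        iterate R Ordinal.omega0 = iterate (fun G => GS p G ⊓ G) Ordinal.omega0 := by
  intro R hR hfix
  classical
  set F : (∀ i, Set (T i)) → (∀ i, Set (T i)) := fun G => GS p G ⊓ G with hF
  have hdom : ∀ (G G' : ∀ i, Set (T i)), G ≤ G' → ∀ i (s' s : T i),
      Dom p G' i s' s → Dom p G i s' s := by
    intro G G' h i s' s hd μ hμ
    exact hd μ fun j hj => h j (hμ j hj)
  have hmono : Monotone F := by
    intro G G' h i s hs
    refine ⟨fun hx => hs.1 ?_, h i hs.2⟩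
    obtain ⟨s', hd⟩ := hx
    exact ⟨s', hdom G G' h i s' s hd⟩
  have hGSle : ∀ G : ∀ i, Set (T i), F G ≤ LS p G ⊓ G := by
    intro G i s hs
    refine ⟨fun hx => hs.1 ?_, hs.2⟩
    obtain ⟨s', _, hd⟩ := hx
    exact ⟨s', hd⟩
  -- R^ω is a fixpoint of R
  have hRfix : R (iterate R Ordinal.omega0) = iterate R Ordinal.omega0 := by
    rw [← iterate_succ' R Ordinal.omega0]; exact hfix
  -- hence a fixpoint of LS̄
  have hLSfix : LS p (iterate R Ordinal.omega0) ⊓ iterate R Ordinal.omega0 =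
      iterate R Ordinal.omega0 := (hR Ordinal.omega0).2.2 hRfix
  have hLSmem : ∀ i s, s ∈ iterate R Ordinal.omega0 i →
      s ∈ LS p (iterate R Ordinal.omega0) i := by
    intro i s hs
    have := hLSfix ▸ hs
    exact (congrFun hLSfix i ▸ hs : s ∈ (LS p (iterate R Ordinal.omega0) ⊓ iterate R Ordinal.omega0) i).1
  -- R^ω is a fixpoint of F = GS̄
  have hFfix : F (iterate R Ordinal.omega0) = iterate R Ordinal.omega0 := by
    apply le_antisymm inf_le_right
    intro i s hs
    refine ⟨fun hx => ?_, hs⟩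
    obtain ⟨s', hmem, hd⟩ := hD R hR i s hx
    exact hLSmem i s hs ⟨s', hmem, hd⟩
  -- Claim 1: iterate F α ≤ iterate R α for all α
  have claim1 : ∀ α : Ordinal.{0}, iterate F α ≤ iterate R α := by
    intro α
    induction α using Ordinal.limitRecOn with
    | zero => rw [iterate_zero', iterate_zero']
    | add_one α ih =>
        rw [iterate_succ', iterate_succ']
        calc F (iterate F α) ≤ F (iterate R α) := hmono ih
          _ ≤ LS p (iterate R α) ⊓ iterate R α := hGSle _
          _ ≤ R (iterate R α) := (hR α).1
    | limit β hβ ih =>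
        rw [iterate_limit' F hβ, iterate_limit' R hβ]
        exact le_iInf fun γ => le_iInf fun hγ =>
          le_trans (iInf_le_of_le γ (iInf_le _ hγ)) (ih γ hγ)
  -- Claim 2: iterate R ω ≤ iterate F α for all α
  have claim2 : ∀ α : Ordinal.{0}, iterate R Ordinal.omega0 ≤ iterate F α := by
    intro α
    induction α using Ordinal.limitRecOn with
    | zero => rw [iterate_zero']; exact le_top
    | add_one α ih =>
        rw [iterate_succ']
        calc iterate R Ordinal.omega0 = F (iterate R Ordinal.omega0) := hFfix.symm
          _ ≤ F (iterate F α) := hmono ih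
    | limit β hβ ih =>
        rw [iterate_limit' F hβ]
        exact le_iInf fun γ => le_iInf fun hγ => ih γ hγ
  exact le_antisymm (claim2 Ordinal.omega0) (claim1 Ordinal.omega0)
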